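/- arXiv:1211.6239 — 6 statements merged into one kernel-verified Lean document; each statement's English description precedes it below -/
import Mathlib

section
/- Fix D₁, D₂ > 0, α > 2, and P > 0, and for each λ > 0 let x₂(λ) be the unique positive root of D₁ x^{α/2} (2^{D₂ π λ x} − 1) = P. Then λ ↦ x₂(λ) is strictly decreasing and λ ↦ λ·x₂(λ) is strictly increasing. -/
open Real Set

/-- If `x₂(λ)` is the unique positive root of `D₁ x^{α/2}(2^{D₂πλx} − 1) = P`, then
`x₂` is strictly decreasing and `λ ↦ λ·x₂(λ)` is strictly increasing. -/
theorem stmt_4 (D₁ D₂ α P : ℝ) (hD₁ : 0 < D₁) (hD₂ : 0 < D₂) (hα : 2 < α) (hP : 0 < P)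
    (x₂ : ℝ → ℝ)
    (hroot : ∀ l > (0:ℝ), 0 < x₂ l ∧
      D₁ * (x₂ l) ^ (α / 2) * ((2 : ℝ) ^ (D₂ * π * l * x₂ l) - 1) = P)
    (huniq : ∀ l > (0:ℝ), ∀ x > (0:ℝ),
      D₁ * x ^ (α / 2) * ((2 : ℝ) ^ (D₂ * π * l * x) - 1) = P → x = x₂ l) :
    StrictAntiOn x₂ (Set.Ioi 0) ∧ StrictMonoOn (fun l => l * x₂ l) (Set.Ioi 0) := by
  have hπ : (0:ℝ) < π := Real.pi_pos
  -- positivity of the exponential factor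
  have hexp_pos : ∀ t : ℝ, 0 < t → (0:ℝ) < (2:ℝ) ^ t - 1 := by
    intro t ht
    have : (2:ℝ) ^ (0:ℝ) < (2:ℝ) ^ t :=
      Real.rpow_lt_rpow_of_exponent_lt one_lt_two ht
    rw [Real.rpow_zero] at this
    linarith
  have hanti : StrictAntiOn x₂ (Set.Ioi 0) := by
    intro l₁ hl₁ l₂ hl₂ hlt
    simp only [Set.mem_Ioi] at hl₁ hl₂
    obtain ⟨ha, hea⟩ := hroot l₁ hl₁
    obtain ⟨hb, heb⟩ := hroot l₂ hl₂
    by_contra hcon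
    push_neg at hcon
    -- hcon : x₂ l₁ ≤ x₂ l₂
    have h1 : D₁ * (x₂ l₁) ^ (α / 2) ≤ D₁ * (x₂ l₂) ^ (α / 2) := by
      have := Real.rpow_le_rpow ha.le hcon (by linarith : (0:ℝ) ≤ α / 2)
      nlinarith
    have hexplt : D₂ * π * l₁ * x₂ l₁ < D₂ * π * l₂ * x₂ l₂ := by
      have : l₁ * x₂ l₁ < l₂ * x₂ l₂ := by nlinarith
      nlinarith [mul_pos hD₂ hπ]
    have h2 : (2:ℝ) ^ (D₂ * π * l₁ * x₂ l₁) - 1 < (2:ℝ) ^ (D₂ * π * l₂ * x₂ l₂) - 1 := by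
      have := Real.rpow_lt_rpow_of_exponent_lt one_lt_two hexplt
      linarith
    have hc : (0:ℝ) ≤ (2:ℝ) ^ (D₂ * π * l₁ * x₂ l₁) - 1 :=
      (hexp_pos _ (by positivity)).le
    have hbpos : 0 < D₁ * (x₂ l₂) ^ (α / 2) := by positivity
    have : P < P := by
      calc P = D₁ * (x₂ l₁) ^ (α / 2) * ((2:ℝ) ^ (D₂ * π * l₁ * x₂ l₁) - 1) := hea.symm
        _ < D₁ * (x₂ l₂) ^ (α / 2) * ((2:ℝ) ^ (D₂ * π * l₂ * x₂ l₂) - 1) :=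
            mul_lt_mul' h1 h2 hc hbpos
        _ = P := heb
    exact absurd this (lt_irrefl P)
  refine ⟨hanti, ?_⟩
  intro l₁ hl₁ l₂ hl₂ hlt
  simp only [Set.mem_Ioi] at hl₁ hl₂
  obtain ⟨ha, hea⟩ := hroot l₁ hl₁
  obtain ⟨hb, heb⟩ := hroot l₂ hl₂
  have hx : x₂ l₂ < x₂ l₁ := hanti hl₁ hl₂ hlt
  by_contra hcon
  push_neg at hcon
  -- hcon : l₂ * x₂ l₂ ≤ l₁ * x₂ l₁
  have h1 : D₁ * (x₂ l₂) ^ (α / 2) < D₁ * (x₂ l₁) ^ (α / 2) := by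
    have := Real.rpow_lt_rpow hb.le hx (by linarith : (0:ℝ) < α / 2)
    nlinarith
  have hexple : D₂ * π * l₂ * x₂ l₂ ≤ D₂ * π * l₁ * x₂ l₁ := by
    nlinarith [mul_pos hD₂ hπ]
  have h2 : (2:ℝ) ^ (D₂ * π * l₂ * x₂ l₂) - 1 ≤ (2:ℝ) ^ (D₂ * π * l₁ * x₂ l₁) - 1 := by
    have := Real.rpow_le_rpow_of_exponent_le one_le_two hexple
    linarith
  have hc : (0:ℝ) < (2:ℝ) ^ (D₂ * π * l₂ * x₂ l₂) - 1 :=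
    hexp_pos _ (by positivity)
  have hbnn : (0:ℝ) ≤ D₁ * (x₂ l₁) ^ (α / 2) := by positivity
  have : P < P := by
    calc P = D₁ * (x₂ l₂) ^ (α / 2) * ((2:ℝ) ^ (D₂ * π * l₂ * x₂ l₂) - 1) := heb.symm
      _ < D₁ * (x₂ l₁) ^ (α / 2) * ((2:ℝ) ^ (D₂ * π * l₁ * x₂ l₁) - 1) :=
          mul_lt_mul h1 h2 hc hbnn
      _ = P := hea
  exact absurd this (lt_irrefl P)
end

section
/- Fix D₁, D₂ > 0, α > 2, μ > 0, P_c > 0, and for λ > 0 define L_λ(x) = D₁ x^{α/2}(2^{D₂πλx} − 1) + P_c − μπλx for x > 0. Then for every x > 0 and every λ with λ < ((α+2)P_c)/(α μ π x_min), where x_min = (2μ/((α+2)(ln 2)D₁D₂))^{2/α}, we have L_λ(x) > 0. -/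
open Real Set

/-- For sufficiently small density `λ`, the Lagrangian
`L_λ(x) = D₁ x^{α/2}(2^{D₂πλx} − 1) + P_c − μπλx` is strictly positive for all `x > 0`. -/
theorem stmt_5 (D₁ D₂ α μ Pc : ℝ) (hD₁ : 0 < D₁) (hD₂ : 0 < D₂) (hα : 2 < α)
    (hμ : 0 < μ) (hPc : 0 < Pc) :
    ∀ x > (0:ℝ), ∀ l > (0:ℝ),
      l < ((α + 2) * Pc) /
          (α * μ * π * ((2 * μ / ((α + 2) * Real.log 2 * D₁ * D₂)) ^ (2 / α))) →
      D₁ * x ^ (α / 2) * ((2 : ℝ) ^ (D₂ * π * l * x) - 1) + Pc - μ * π * l * x > 0 := by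
  intro x hx l hl hlt
  have hl2 : (0:ℝ) < Real.log 2 := Real.log_pos (by norm_num)
  have hπ : (0:ℝ) < π := Real.pi_pos
  have hα0 : (0:ℝ) < α := by linarith
  set c : ℝ := Real.log 2 * D₁ * D₂ with hc
  have hc0 : 0 < c := by positivity
  set p : ℝ := (α + 2) / 2 with hp
  set q : ℝ := (α + 2) / α with hq
  have hp1 : 1 < p := by rw [hp]; linarith
  have hp0 : 0 < p := by linarith
  have hq0 : 0 < q := by rw [hq]; positivity
  have hpq : p.HolderConjugate q := Real.holderConjugate_iff.mpr ⟨hp1, by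
    rw [hp, hq]
    field_simp
    ring⟩
  have hcp : 0 < c * p := by positivity
  -- X is the minimizer point
  set X : ℝ := (2 * μ / ((α + 2) * Real.log 2 * D₁ * D₂)) ^ (2 / α) with hX
  have hbase : 2 * μ / ((α + 2) * Real.log 2 * D₁ * D₂) = μ / (c * p) := by
    rw [hc, hp]; field_simp
  have hX0 : 0 < X := by
    rw [hX, hbase]
    exact Real.rpow_pos_of_pos (by positivity) _
  -- A = (c p)^(1/p)
  set A : ℝ := (c * p) ^ (1 / p) with hA
  have hA0 : 0 < A := Real.rpow_pos_of_pos hcp _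
  -- Young's inequality
  have hyoung := Real.young_inequality_of_nonneg (mul_nonneg hA0.le hx.le)
    (div_nonneg hμ.le hA0.le) hpq
  have hAp : A ^ p = c * p := by
    rw [hA, ← Real.rpow_mul hcp.le, one_div_mul_cancel hp0.ne', Real.rpow_one]
  have hAq : A ^ q = (c * p) ^ (2 / α) := by
    rw [hA, ← Real.rpow_mul hcp.le]
    congr 1
    rw [hp, hq]; field_simp
  have hAB : (A * x) * (μ / A) = μ * x := by
    field_simp
  have hAxp : (A * x) ^ p = (c * p) * x ^ p := by
    rw [Real.mul_rpow hA0.le hx.le, hAp]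
  have hBq : (μ / A) ^ q = μ ^ q / (c * p) ^ (2 / α) := by
    rw [Real.div_rpow hμ.le hA0.le, hAq]
  have hμX : μ * X = μ ^ q / (c * p) ^ (2 / α) := by
    rw [hX, hbase, Real.div_rpow hμ.le hcp.le]
    rw [show q = 1 + 2 / α by rw [hq]; field_simp]
    rw [Real.rpow_add hμ, Real.rpow_one]
    ring
  have key : μ * x ≤ c * x ^ p + μ * X / q := by
    rw [hAB, hAxp, hBq] at hyoung
    rw [hμX]
    calc μ * x ≤ (c * p) * x ^ p / p + μ ^ q / (c * p) ^ (2 / α) / q := hyoung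
      _ = c * x ^ p + μ ^ q / (c * p) ^ (2 / α) / q := by
          field_simp
  -- lower bound on 2^t - 1
  have h2t : Real.log 2 * (D₂ * π * l * x) + 1 ≤ (2:ℝ) ^ (D₂ * π * l * x) := by
    rw [Real.rpow_def_of_pos (by norm_num : (0:ℝ) < 2)]
    exact Real.add_one_le_exp _
  have hxp : x ^ (α / 2) * x = x ^ p := by
    rw [hp, show (α + 2) / 2 = α / 2 + 1 by ring, Real.rpow_add_one hx.ne']
  have hxap : 0 ≤ x ^ (α / 2) := Real.rpow_nonneg hx.le _
  have h1 : D₁ * x ^ (α / 2) * ((2:ℝ) ^ (D₂ * π * l * x) - 1)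
      ≥ c * (π * l) * x ^ p := by
    have h2 : D₁ * x ^ (α / 2) * ((2:ℝ) ^ (D₂ * π * l * x) - 1)
        ≥ D₁ * x ^ (α / 2) * (Real.log 2 * (D₂ * π * l * x)) := by
      apply mul_le_mul_of_nonneg_left (by linarith) (by positivity)
    calc D₁ * x ^ (α / 2) * ((2:ℝ) ^ (D₂ * π * l * x) - 1)
        ≥ D₁ * x ^ (α / 2) * (Real.log 2 * (D₂ * π * l * x)) := h2
      _ = c * (π * l) * (x ^ (α / 2) * x) := by rw [hc]; ring
      _ = c * (π * l) * x ^ p := by rw [hxp]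
  -- the density condition
  have hdenom : 0 < α * μ * π * X := by positivity
  have hcond : π * l * (μ * X / q) < Pc := by
    have h3 : l * (α * μ * π * X) < (α + 2) * Pc := (lt_div_iff₀ hdenom).mp hlt
    have h4 : π * l * (μ * X / q) = l * (α * μ * π * X) / (α + 2) := by
      rw [hq]; field_simp
    rw [h4]
    rw [div_lt_iff₀ (by linarith : (0:ℝ) < α + 2)]
    linarith
  -- combine
  have h6 : μ * π * l * x ≤ c * (π * l) * x ^ p + π * l * (μ * X / q) := by
    calc μ * π * l * x = π * l * (μ * x) := by ring
      _ ≤ π * l * (c * x ^ p + μ * X / q) :=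
          mul_le_mul_of_nonneg_left key (by positivity)
      _ = c * (π * l) * x ^ p + π * l * (μ * X / q) := by ring
  linarith [h1, h6, hcond]
end

section
/- Fix D₁, D₂ > 0, α > 2, μ > 0, P_c > 0, and for λ > 0 define m(λ) = inf_{x>0} [D₁ x^{α/2}(2^{D₂πλx} − 1) + P_c − μπλx]. If m(λ_a) ≤ 0 for some λ_a > 0, then m(λ_b) < 0 for all λ_b > λ_a. -/
open Real Set

private lemma two_rpow_sub_one_ge (t : ℝ) : t * Real.log 2 ≤ (2:ℝ) ^ t - 1 := by
  have h : (2:ℝ) ^ t = Real.exp (t * Real.log 2) := by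
    rw [Real.rpow_def_of_pos (by norm_num), mul_comm]
  rw [h]
  linarith [Real.add_one_le_exp (t * Real.log 2)]

private lemma aux_bdd (D₁ D₂ α μ Pc l : ℝ) (hD₁ : 0 < D₁) (hD₂ : 0 < D₂)
    (hα : 2 < α) (hμ : 0 < μ) (hl : 0 < l) :
    BddBelow ((fun x : ℝ =>
      D₁ * x ^ (α / 2) * ((2 : ℝ) ^ (D₂ * π * l * x) - 1) + Pc - μ * π * l * x)
        '' Set.Ioi 0) := by
  have hπ := Real.pi_pos
  have hlog : 0 < Real.log 2 := Real.log_pos (by norm_num)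
  set K := μ / (D₁ * D₂ * Real.log 2) with hKdef
  set M := max 1 K with hMdef
  have hM0 : 0 ≤ M := le_trans zero_le_one (le_max_left 1 K)
  refine ⟨Pc - μ * π * l * M, ?_⟩
  rintro y ⟨x, hx, rfl⟩
  simp only [Set.mem_Ioi] at hx
  have ht : 0 ≤ D₂ * π * l * x := by positivity
  have h2 : (1:ℝ) ≤ (2:ℝ) ^ (D₂ * π * l * x) := Real.one_le_rpow (by norm_num) ht
  have hxp0 : (0:ℝ) ≤ x ^ (α/2) := Real.rpow_nonneg hx.le _
  have hterm : 0 ≤ D₁ * x ^ (α/2) * ((2:ℝ) ^ (D₂ * π * l * x) - 1) :=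
    mul_nonneg (mul_nonneg hD₁.le hxp0) (by linarith)
  rcases le_or_gt x M with h | h
  · have : μ * π * l * x ≤ μ * π * l * M := by
      have := mul_le_mul_of_nonneg_left h (show (0:ℝ) ≤ μ * π * l by positivity)
      linarith [this]
    simp only
    linarith
  · have hx1 : (1:ℝ) ≤ x := le_trans (le_max_left 1 K) h.le
    have hxp : x ≤ x ^ (α/2) := by
      calc x = x ^ (1:ℝ) := (Real.rpow_one x).symm
      _ ≤ x ^ (α/2) := Real.rpow_le_rpow_of_exponent_le hx1 (by linarith)
    have hKx : K ≤ x := le_trans (le_max_right 1 K) h.le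
    have h1 : D₂ * π * l * x * Real.log 2 ≤ (2:ℝ)^(D₂*π*l*x) - 1 :=
      two_rpow_sub_one_ge _
    have hKle : μ ≤ D₁ * D₂ * Real.log 2 * x := by
      have hmul : K * (D₁ * D₂ * Real.log 2) = μ := by
        rw [hKdef]; exact div_mul_cancel₀ μ (by positivity)
      nlinarith [mul_le_mul_of_nonneg_right hKx (show (0:ℝ) ≤ D₁ * D₂ * Real.log 2 by positivity)]
    have h3 : μ * π * l * x ≤ D₁ * x ^ (α/2) * ((2:ℝ)^(D₂*π*l*x) - 1) := by
      calc μ * π * l * x ≤ (D₁ * D₂ * Real.log 2 * x) * π * l * x := by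
            exact mul_le_mul_of_nonneg_right (mul_le_mul_of_nonneg_right
              (mul_le_mul_of_nonneg_right hKle hπ.le) hl.le) hx.le
        _ = D₁ * x * (D₂ * π * l * x * Real.log 2) := by ring
        _ ≤ D₁ * x ^ (α/2) * (D₂ * π * l * x * Real.log 2) :=
            mul_le_mul_of_nonneg_right (mul_le_mul_of_nonneg_left hxp hD₁.le)
              (by positivity)
        _ ≤ D₁ * x ^ (α/2) * ((2:ℝ)^(D₂*π*l*x) - 1) :=
            mul_le_mul_of_nonneg_left h1 (by positivity)
    have h4 : 0 ≤ μ * π * l * M := mul_nonneg (by positivity) hM0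
    simp only
    linarith

/-- If the minimized Lagrangian `m(λ) = inf_{x>0} [D₁ x^{α/2}(2^{D₂πλx} − 1) + P_c − μπλx]`
is nonpositive at some `λ_a > 0`, then it is strictly negative for all `λ_b > λ_a`. -/
theorem stmt_8 (D₁ D₂ α μ Pc : ℝ) (hD₁ : 0 < D₁) (hD₂ : 0 < D₂) (hα : 2 < α)
    (hμ : 0 < μ) (hPc : 0 < Pc)
    (m : ℝ → ℝ)
    (hm : ∀ l, m l = sInf ((fun x : ℝ =>
      D₁ * x ^ (α / 2) * ((2 : ℝ) ^ (D₂ * π * l * x) - 1) + Pc - μ * π * l * x)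
        '' Set.Ioi 0))
    (la : ℝ) (hla : 0 < la) (hneg : m la ≤ 0) :
    ∀ lb > la, m lb < 0 := by
  intro lb hlb
  have hπ := Real.pi_pos
  have hlb0 : 0 < lb := lt_trans hla hlb
  set r := la / lb with hr
  have hr0 : 0 < r := div_pos hla hlb0
  have hr1 : r < 1 := (div_lt_one hlb0).mpr hlb
  set δ := Pc / (2 * μ * π * la) with hδ
  have hδ0 : 0 < δ := by positivity
  have hc0 : (0:ℝ) < (2:ℝ)^(D₂*π*la*δ) - 1 := by
    have : (1:ℝ) < (2:ℝ)^(D₂*π*la*δ) :=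
      Real.one_lt_rpow_iff_of_pos (by norm_num) |>.mpr (Or.inl ⟨by norm_num, by positivity⟩)
    linarith
  have hrp1 : r ^ (α/2) < 1 := Real.rpow_lt_one hr0.le hr1 (by linarith)
  have hrpnn : 0 ≤ r ^ (α/2) := Real.rpow_nonneg hr0.le _
  have hδp0 : 0 < δ ^ (α/2) := Real.rpow_pos_of_pos hδ0 _
  set K := D₁ * (δ ^ (α/2) * (1 - r ^ (α/2))) * ((2:ℝ)^(D₂*π*la*δ) - 1) with hK
  have hK0 : 0 < K := by
    apply mul_pos (mul_pos hD₁ (mul_pos hδp0 (by linarith))) hc0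
  set ε := min (Pc/2) K with hε
  have hε0 : 0 < ε := lt_min (by linarith) hK0
  have hne : ((fun x : ℝ =>
      D₁ * x ^ (α / 2) * ((2 : ℝ) ^ (D₂ * π * la * x) - 1) + Pc - μ * π * la * x)
        '' Set.Ioi 0).Nonempty := ⟨_, ⟨1, by norm_num, rfl⟩⟩
  have hlt : sInf ((fun x : ℝ =>
      D₁ * x ^ (α / 2) * ((2 : ℝ) ^ (D₂ * π * la * x) - 1) + Pc - μ * π * la * x)
        '' Set.Ioi 0) < ε := lt_of_le_of_lt (by rw [← hm la]; exact hneg) hε0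
  obtain ⟨y, ⟨xa, hxa, rfl⟩, hy⟩ := exists_lt_of_csInf_lt hne hlt
  simp only [Set.mem_Ioi] at hxa
  simp only at hy
  have hεPc : ε ≤ Pc/2 := min_le_left _ _
  have hεK : ε ≤ K := min_le_right _ _
  have htnn : 0 ≤ D₂ * π * la * xa := by positivity
  have h2ge : (1:ℝ) ≤ (2:ℝ) ^ (D₂ * π * la * xa) := Real.one_le_rpow (by norm_num) htnn
  have hxapnn : (0:ℝ) ≤ xa ^ (α/2) := Real.rpow_nonneg hxa.le _
  have htermnn : 0 ≤ D₁ * xa ^ (α/2) * ((2:ℝ) ^ (D₂ * π * la * xa) - 1) :=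
    mul_nonneg (mul_nonneg hD₁.le hxapnn) (by linarith)
  have hmuxa : Pc/2 < μ * π * la * xa := by
    by_contra hcon
    push_neg at hcon
    linarith
  have hxaδ : δ ≤ xa := by
    rw [hδ, div_le_iff₀ (by positivity)]
    nlinarith
  set xb := xa * r with hxb
  have hxb0 : 0 < xb := mul_pos hxa hr0
  have hkey : lb * xb = la * xa := by
    rw [hxb, hr]; field_simp
  have hexp : D₂ * π * lb * xb = D₂ * π * la * xa := by
    linear_combination (D₂ * π) * hkey
  have hlin : μ * π * lb * xb = μ * π * la * xa := by
    linear_combination (μ * π) * hkey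
  have hxbp : xb ^ (α/2) = xa ^ (α/2) * r ^ (α/2) := Real.mul_rpow hxa.le hr0.le
  have hδle : δ ^ (α/2) ≤ xa ^ (α/2) := Real.rpow_le_rpow hδ0.le hxaδ (by linarith)
  have h2mono : (2:ℝ) ^ (D₂*π*la*δ) ≤ (2:ℝ) ^ (D₂ * π * la * xa) :=
    Real.rpow_le_rpow_of_exponent_le (by norm_num)
      (mul_le_mul_of_nonneg_left hxaδ (by positivity))
  have hs : 0 ≤ 1 - r ^ (α/2) := by linarith
  have hgap : K ≤ D₁ * (xa ^ (α/2) * (1 - r ^ (α/2))) * ((2:ℝ) ^ (D₂ * π * la * xa) - 1) := by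
    rw [hK]
    have step1 : δ ^ (α/2) * (1 - r ^ (α/2)) ≤ xa ^ (α/2) * (1 - r ^ (α/2)) :=
      mul_le_mul_of_nonneg_right hδle hs
    have step2 : δ ^ (α/2) * (1 - r ^ (α/2)) * ((2:ℝ)^(D₂*π*la*δ) - 1)
        ≤ xa ^ (α/2) * (1 - r ^ (α/2)) * ((2:ℝ) ^ (D₂ * π * la * xa) - 1) :=
      mul_le_mul step1 (by linarith) hc0.le (by positivity)
    calc D₁ * (δ ^ (α/2) * (1 - r ^ (α/2))) * ((2:ℝ)^(D₂*π*la*δ) - 1)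
        = D₁ * (δ ^ (α/2) * (1 - r ^ (α/2)) * ((2:ℝ)^(D₂*π*la*δ) - 1)) := by ring
      _ ≤ D₁ * (xa ^ (α/2) * (1 - r ^ (α/2)) * ((2:ℝ) ^ (D₂ * π * la * xa) - 1)) :=
          mul_le_mul_of_nonneg_left step2 hD₁.le
      _ = D₁ * (xa ^ (α/2) * (1 - r ^ (α/2))) * ((2:ℝ) ^ (D₂ * π * la * xa) - 1) := by ring
  have hfb : D₁ * xb ^ (α / 2) * ((2 : ℝ) ^ (D₂ * π * lb * xb) - 1) + Pc - μ * π * lb * xb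
      = (D₁ * xa ^ (α / 2) * ((2 : ℝ) ^ (D₂ * π * la * xa) - 1) + Pc - μ * π * la * xa)
        - D₁ * (xa ^ (α/2) * (1 - r ^ (α/2))) * ((2 : ℝ) ^ (D₂ * π * la * xa) - 1) := by
    rw [hexp, hlin, hxbp]; ring
  have hfbneg : D₁ * xb ^ (α / 2) * ((2 : ℝ) ^ (D₂ * π * lb * xb) - 1) + Pc - μ * π * lb * xb < 0 := by
    rw [hfb]; linarith
  rw [hm lb]
  calc sInf ((fun x : ℝ =>
      D₁ * x ^ (α / 2) * ((2 : ℝ) ^ (D₂ * π * lb * x) - 1) + Pc - μ * π * lb * x)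
        '' Set.Ioi 0)
      ≤ D₁ * xb ^ (α / 2) * ((2 : ℝ) ^ (D₂ * π * lb * xb) - 1) + Pc - μ * π * lb * xb :=
        csInf_le (aux_bdd D₁ D₂ α μ Pc lb hD₁ hD₂ hα hμ hlb0) ⟨xb, hxb0, rfl⟩
    _ < 0 := hfbneg
end

section
/- Fix D₁, D₂ > 0, α > 2, μ > 0, and suppose x₁(λ) > 0 satisfies the stationarity equation (α/2)D₁ x^{(α−2)/2}(2^{D₂πλx} − 1) + (ln 2)D₁D₂πλ x^{α/2} 2^{D₂πλx} = μπλ for each λ > 0, with this equation having a unique positive root. Then λ ↦ x₁(λ) is strictly decreasing and λ ↦ λ·x₁(λ) is strictly increasing. -/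
open Real Set

/-- The function `s ↦ (2^s - 1)/s` is strictly increasing on positive reals. -/
private lemma slope2 {s t : ℝ} (hs : 0 < s) (hst : s < t) :
    ((2:ℝ) ^ s - 1) / s < ((2:ℝ) ^ t - 1) / t := by
  have hlog : (0:ℝ) < Real.log 2 := Real.log_pos (by norm_num)
  have hs' : s * Real.log 2 ≠ 0 := (mul_pos hs hlog).ne'
  have ht' : t * Real.log 2 ≠ 0 := (mul_pos (hs.trans hst) hlog).ne'
  have key := strictConvexOn_exp.secant_strict_mono (a := 0)
    (x := s * Real.log 2) (y := t * Real.log 2) (mem_univ _) (mem_univ _) (mem_univ _)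
    hs' ht' (by nlinarith)
  rw [Real.exp_zero, sub_zero, sub_zero] at key
  have e2 : ∀ u : ℝ, Real.exp (u * Real.log 2) = (2:ℝ) ^ u := by
    intro u
    rw [Real.rpow_def_of_pos (by norm_num : (0:ℝ) < 2), mul_comm]
  rw [e2, e2, ← div_div, ← div_div] at key
  exact (div_lt_div_iff_of_pos_right hlog).mp key

/-- `2^u > 1` for `u > 0`. -/
private lemma one_lt_two_rpow {u : ℝ} (hu : 0 < u) : (1:ℝ) < (2:ℝ) ^ u := by
  have := (Real.rpow_lt_rpow_left_iff (x := (2:ℝ)) (y := 0) (z := u)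
    (by norm_num)).mpr hu
  rwa [Real.rpow_zero] at this

set_option maxHeartbeats 1000000 in
/-- If `x₁(λ)` is the unique positive root of the stationarity equation
`(α/2)D₁ x^{(α−2)/2}(2^{D₂πλx} − 1) + (ln 2)D₁D₂πλ x^{α/2} 2^{D₂πλx} = μπλ`, then
`x₁` is strictly decreasing and `λ ↦ λ·x₁(λ)` is strictly increasing. -/
theorem stmt_9 (D₁ D₂ α μ : ℝ) (hD₁ : 0 < D₁) (hD₂ : 0 < D₂) (hα : 2 < α) (hμ : 0 < μ)
    (x₁ : ℝ → ℝ)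
    (hroot : ∀ l > (0:ℝ), 0 < x₁ l ∧
      (α / 2) * D₁ * (x₁ l) ^ ((α - 2) / 2) * ((2 : ℝ) ^ (D₂ * π * l * x₁ l) - 1)
        + Real.log 2 * D₁ * D₂ * π * l * (x₁ l) ^ (α / 2)
            * (2 : ℝ) ^ (D₂ * π * l * x₁ l)
      = μ * π * l)
    (huniq : ∀ l > (0:ℝ), ∀ x > (0:ℝ),
      (α / 2) * D₁ * x ^ ((α - 2) / 2) * ((2 : ℝ) ^ (D₂ * π * l * x) - 1)
        + Real.log 2 * D₁ * D₂ * π * l * x ^ (α / 2) * (2 : ℝ) ^ (D₂ * π * l * x)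
      = μ * π * l → x = x₁ l) :
    StrictAntiOn x₁ (Set.Ioi 0) ∧ StrictMonoOn (fun l => l * x₁ l) (Set.Ioi 0) := by
  have hπ : (0:ℝ) < π := Real.pi_pos
  have hlog : (0:ℝ) < Real.log 2 := Real.log_pos (by norm_num)
  have hp : (0:ℝ) < (α - 2) / 2 := by linarith
  have hq : (0:ℝ) < α / 2 := by linarith
  -- the equation divided by l
  have hΦ : ∀ l > (0:ℝ),
      (α / 2) * D₁ * (x₁ l) ^ ((α - 2) / 2)
          * (((2 : ℝ) ^ (D₂ * π * l * x₁ l) - 1) / l)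
        + Real.log 2 * D₁ * D₂ * π * (x₁ l) ^ (α / 2)
            * (2 : ℝ) ^ (D₂ * π * l * x₁ l)
      = μ * π := by
    intro l hl
    have h := (hroot l hl).2
    have hl0 : l ≠ 0 := ne_of_gt hl
    apply mul_right_cancel₀ hl0
    calc (α / 2 * D₁ * x₁ l ^ ((α - 2) / 2) * ((2 ^ (D₂ * π * l * x₁ l) - 1) / l)
          + Real.log 2 * D₁ * D₂ * π * x₁ l ^ (α / 2) * 2 ^ (D₂ * π * l * x₁ l)) * l
        = α / 2 * D₁ * x₁ l ^ ((α - 2) / 2) * (2 ^ (D₂ * π * l * x₁ l) - 1)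
          + Real.log 2 * D₁ * D₂ * π * l * x₁ l ^ (α / 2) * 2 ^ (D₂ * π * l * x₁ l) := by
          field_simp
      _ = μ * π * l := h
  -- the equation multiplied by l ^ ((α-2)/2), in terms of y = l * x₁ l
  have hK : ∀ l > (0:ℝ),
      (α / 2) * D₁ * (l * x₁ l) ^ ((α - 2) / 2)
          * ((2 : ℝ) ^ (D₂ * π * (l * x₁ l)) - 1)
        + Real.log 2 * D₁ * D₂ * π * (l * x₁ l) ^ (α / 2)
            * (2 : ℝ) ^ (D₂ * π * (l * x₁ l))
      = μ * π * l ^ (α / 2) := by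
    intro l hl
    obtain ⟨hx, h⟩ := hroot l hl
    have hm1 : (l * x₁ l) ^ ((α - 2) / 2) = l ^ ((α - 2) / 2) * (x₁ l) ^ ((α - 2) / 2) :=
      Real.mul_rpow hl.le hx.le
    have hm2 : (l * x₁ l) ^ (α / 2) = l ^ (α / 2) * (x₁ l) ^ (α / 2) :=
      Real.mul_rpow hl.le hx.le
    have hm3 : l ^ (α / 2) = l ^ ((α - 2) / 2) * l := by
      rw [show α / 2 = (α - 2) / 2 + 1 by ring, Real.rpow_add_one hl.ne', ]
    have hme : D₂ * π * (l * x₁ l) = D₂ * π * l * x₁ l := by ring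
    rw [hme, hm1, hm2, hm3]
    linear_combination l ^ ((α - 2) / 2) * h
  -- strict monotonicity of the K function on positives
  have hKmono : ∀ y₁ y₂ : ℝ, 0 < y₁ → y₁ < y₂ →
      (α / 2) * D₁ * y₁ ^ ((α - 2) / 2) * ((2 : ℝ) ^ (D₂ * π * y₁) - 1)
        + Real.log 2 * D₁ * D₂ * π * y₁ ^ (α / 2) * (2 : ℝ) ^ (D₂ * π * y₁)
      < (α / 2) * D₁ * y₂ ^ ((α - 2) / 2) * ((2 : ℝ) ^ (D₂ * π * y₂) - 1)
        + Real.log 2 * D₁ * D₂ * π * y₂ ^ (α / 2) * (2 : ℝ) ^ (D₂ * π * y₂) := by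
    intro y₁ y₂ hy₁ hy₁₂
    have hy₂ : 0 < y₂ := hy₁.trans hy₁₂
    have ha : y₁ ^ ((α - 2) / 2) < y₂ ^ ((α - 2) / 2) := Real.rpow_lt_rpow hy₁.le hy₁₂ hp
    have ha' : (0:ℝ) < y₁ ^ ((α - 2) / 2) := Real.rpow_pos_of_pos hy₁ _
    have hb : (2 : ℝ) ^ (D₂ * π * y₁) < (2 : ℝ) ^ (D₂ * π * y₂) :=
      (Real.rpow_lt_rpow_left_iff (by norm_num)).mpr
        (mul_lt_mul_of_pos_left hy₁₂ (mul_pos hD₂ hπ))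
    have hb' : (0:ℝ) < (2 : ℝ) ^ (D₂ * π * y₁) - 1 := by
      have := one_lt_two_rpow (u := D₂ * π * y₁) (by positivity); linarith
    have hc : y₁ ^ (α / 2) < y₂ ^ (α / 2) := Real.rpow_lt_rpow hy₁.le hy₁₂ hq
    have hc' : (0:ℝ) < y₁ ^ (α / 2) := Real.rpow_pos_of_pos hy₁ _
    have h1 : y₁ ^ ((α - 2) / 2) * ((2 : ℝ) ^ (D₂ * π * y₁) - 1)
        < y₂ ^ ((α - 2) / 2) * ((2 : ℝ) ^ (D₂ * π * y₂) - 1) :=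
      mul_lt_mul'' ha (by linarith) ha'.le hb'.le
    have h2 : y₁ ^ (α / 2) * (2 : ℝ) ^ (D₂ * π * y₁)
        < y₂ ^ (α / 2) * (2 : ℝ) ^ (D₂ * π * y₂) := by
      have : (0:ℝ) < (2 : ℝ) ^ (D₂ * π * y₁) := Real.rpow_pos_of_pos (by norm_num) _
      exact mul_lt_mul'' hc hb hc'.le this.le
    have c1 : (0:ℝ) < α / 2 * D₁ := by positivity
    have c2 : (0:ℝ) < Real.log 2 * D₁ * D₂ * π := by positivity
    linarith [mul_lt_mul_of_pos_left h1 c1, mul_lt_mul_of_pos_left h2 c2]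
  constructor
  · -- strictly decreasing
    intro l₁ hl₁ l₂ hl₂ h12
    simp only [mem_Ioi] at hl₁ hl₂
    obtain ⟨hx₁, -⟩ := hroot l₁ hl₁
    obtain ⟨hx₂, -⟩ := hroot l₂ hl₂
    by_contra hcon
    push_neg at hcon  -- x₁ l₁ ≤ x₁ l₂
    -- Φ(l₂, x) at x = x₁ l₁, abstractly
    have key : μ * π < μ * π := by
      have e1 := hΦ l₁ hl₁
      have e2 := hΦ l₂ hl₂
      -- step 1: Φ(l₁, x₁ l₁) < Φ(l₂, x₁ l₁)
      set x := x₁ l₁ with hxdef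
      have hslt : D₂ * π * l₁ * x < D₂ * π * l₂ * x :=
        mul_lt_mul_of_pos_right (mul_lt_mul_of_pos_left h12 (mul_pos hD₂ hπ)) hx₁
      have hspos : 0 < D₂ * π * l₁ * x := by positivity
      have sl := slope2 hspos hslt
      have q1 : ((2:ℝ) ^ (D₂ * π * l₁ * x) - 1) / l₁
          < ((2:ℝ) ^ (D₂ * π * l₂ * x) - 1) / l₂ := by
        have r1 : ((2:ℝ) ^ (D₂ * π * l₁ * x) - 1) / l₁
            = (D₂ * π * x) * (((2:ℝ) ^ (D₂ * π * l₁ * x) - 1) / (D₂ * π * l₁ * x)) := by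
          field_simp
        have r2 : ((2:ℝ) ^ (D₂ * π * l₂ * x) - 1) / l₂
            = (D₂ * π * x) * (((2:ℝ) ^ (D₂ * π * l₂ * x) - 1) / (D₂ * π * l₂ * x)) := by
          field_simp
        rw [r1, r2]
        exact mul_lt_mul_of_pos_left sl (by positivity)
      have q2 : (2:ℝ) ^ (D₂ * π * l₁ * x) < (2:ℝ) ^ (D₂ * π * l₂ * x) :=
        (Real.rpow_lt_rpow_left_iff (by norm_num)).mpr hslt
      have hxp : (0:ℝ) < x ^ ((α - 2) / 2) := Real.rpow_pos_of_pos hx₁ _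
      have hxq : (0:ℝ) < x ^ (α / 2) := Real.rpow_pos_of_pos hx₁ _
      have step1 : μ * π <
          (α / 2) * D₁ * x ^ ((α - 2) / 2) * (((2:ℝ) ^ (D₂ * π * l₂ * x) - 1) / l₂)
            + Real.log 2 * D₁ * D₂ * π * x ^ (α / 2) * (2:ℝ) ^ (D₂ * π * l₂ * x) := by
        rw [← e1]
        have t1 := mul_lt_mul_of_pos_left q1 (show (0:ℝ) < α / 2 * D₁ * x ^ ((α - 2) / 2) by positivity)
        have t2 := mul_lt_mul_of_pos_left q2 (show (0:ℝ) < Real.log 2 * D₁ * D₂ * π * x ^ (α / 2) by positivity)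
        linarith
      -- step 2: Φ(l₂, x₁ l₁) ≤ Φ(l₂, x₁ l₂)
      have step2 :
          (α / 2) * D₁ * x ^ ((α - 2) / 2) * (((2:ℝ) ^ (D₂ * π * l₂ * x) - 1) / l₂)
            + Real.log 2 * D₁ * D₂ * π * x ^ (α / 2) * (2:ℝ) ^ (D₂ * π * l₂ * x)
          ≤ (α / 2) * D₁ * (x₁ l₂) ^ ((α - 2) / 2)
              * (((2:ℝ) ^ (D₂ * π * l₂ * x₁ l₂) - 1) / l₂)
            + Real.log 2 * D₁ * D₂ * π * (x₁ l₂) ^ (α / 2)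
              * (2:ℝ) ^ (D₂ * π * l₂ * x₁ l₂) := by
        have ma : x ^ ((α - 2) / 2) ≤ (x₁ l₂) ^ ((α - 2) / 2) :=
          Real.rpow_le_rpow hx₁.le hcon hp.le
        have mb : (2:ℝ) ^ (D₂ * π * l₂ * x) ≤ (2:ℝ) ^ (D₂ * π * l₂ * x₁ l₂) :=
          Real.rpow_le_rpow_left_iff (by norm_num) |>.mpr
            (mul_le_mul_of_nonneg_left hcon (by positivity))
        have mc : x ^ (α / 2) ≤ (x₁ l₂) ^ (α / 2) :=
          Real.rpow_le_rpow hx₁.le hcon hq.le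
        have mb0 : (0:ℝ) < (2:ℝ) ^ (D₂ * π * l₂ * x) - 1 := by
          have := one_lt_two_rpow (u := D₂ * π * l₂ * x) (by positivity); linarith
        have u1 : x ^ ((α - 2) / 2) * (((2:ℝ) ^ (D₂ * π * l₂ * x) - 1) / l₂)
            ≤ (x₁ l₂) ^ ((α - 2) / 2) * (((2:ℝ) ^ (D₂ * π * l₂ * x₁ l₂) - 1) / l₂) :=
          mul_le_mul ma ((div_le_div_iff_of_pos_right hl₂).mpr (by linarith))
            (div_nonneg mb0.le hl₂.le) (by positivity)
        have u2 : x ^ (α / 2) * (2:ℝ) ^ (D₂ * π * l₂ * x)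
            ≤ (x₁ l₂) ^ (α / 2) * (2:ℝ) ^ (D₂ * π * l₂ * x₁ l₂) :=
          mul_le_mul mc mb (by positivity) (by positivity)
        have c1 : (0:ℝ) ≤ α / 2 * D₁ := by positivity
        have c2 : (0:ℝ) ≤ Real.log 2 * D₁ * D₂ * π := by positivity
        linarith [mul_le_mul_of_nonneg_left u1 c1, mul_le_mul_of_nonneg_left u2 c2]
      linarith
    exact absurd key (lt_irrefl _)
  · -- λ ↦ λ * x₁ λ strictly increasing
    intro l₁ hl₁ l₂ hl₂ h12
    simp only [mem_Ioi] at hl₁ hl₂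
    obtain ⟨hx₁, -⟩ := hroot l₁ hl₁
    obtain ⟨hx₂, -⟩ := hroot l₂ hl₂
    have k1 := hK l₁ hl₁
    have k2 := hK l₂ hl₂
    have hy₁ : 0 < l₁ * x₁ l₁ := by positivity
    have hy₂ : 0 < l₂ * x₁ l₂ := by positivity
    have hrhs : μ * π * l₁ ^ (α / 2) < μ * π * l₂ ^ (α / 2) := by
      have := Real.rpow_lt_rpow hl₁.le h12 hq
      exact mul_lt_mul_of_pos_left this (by positivity)
    by_contra hcon
    push_neg at hcon  -- l₂ * x₁ l₂ ≤ l₁ * x₁ l₁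
    rcases eq_or_lt_of_le hcon with heq | hlt
    · rw [← heq] at k1
      rw [k2] at k1
      linarith
    · have := hKmono _ _ hy₂ hlt
      rw [k1, k2] at this
      linarith
end

section
/- Under the assumptions of the previous statement (x₁(λ) the positive stationary point of L_λ), the function λ ↦ P̄(λ) := D₁ x₁(λ)^{α/2}(2^{D₂πλx₁(λ)} − 1) is strictly increasing in λ. -/
open Real Set

lemma one_lt_two_rpow' {y : ℝ} (hy : 0 < y) : 1 < (2:ℝ) ^ y :=
  Real.one_lt_rpow_iff_of_pos (by norm_num) |>.2 (Or.inl ⟨one_lt_two, hy⟩)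

lemma ratio_aux {u v : ℝ} (hu : 0 < u) (huv : u < v) :
    ((2:ℝ) ^ u - 1) * v < ((2:ℝ) ^ v - 1) * u := by
  have hv : 0 < v := hu.trans huv
  have hb : 0 < u / v := div_pos hu hv
  have ha : 0 < 1 - u / v := by
    have : u / v < 1 := (div_lt_one hv).2 huv
    linarith
  have hne : (0:ℝ) ≠ v * Real.log 2 := by
    have := Real.log_pos (by norm_num : (1:ℝ) < 2)
    positivity
  have key := strictConvexOn_exp.2 (Set.mem_univ (0:ℝ)) (Set.mem_univ (v * Real.log 2))
      hne ha hb (by ring)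
  simp only [smul_eq_mul, mul_zero, zero_add, Real.exp_zero, mul_one] at key
  have h1 : u / v * (v * Real.log 2) = Real.log 2 * u := by field_simp
  rw [h1] at key
  have e1 : (2:ℝ) ^ u = Real.exp (Real.log 2 * u) := Real.rpow_def_of_pos (by norm_num) u
  have e2 : (2:ℝ) ^ v = Real.exp (Real.log 2 * v) := Real.rpow_def_of_pos (by norm_num) v
  rw [mul_comm v (Real.log 2)] at key
  rw [e1, e2]
  have := mul_lt_mul_of_pos_right key hv
  have hvne : v ≠ 0 := hv.ne'
  field_simp at this
  nlinarith [this]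

set_option maxHeartbeats 800000 in
/-- With `x₁(λ)` the positive stationary point of the Lagrangian, the optimal transmit
power `P̄(λ) = D₁ x₁(λ)^{α/2}(2^{D₂πλx₁(λ)} − 1)` is strictly increasing in `λ`. -/
theorem stmt_10 (D₁ D₂ α μ : ℝ) (hD₁ : 0 < D₁) (hD₂ : 0 < D₂) (hα : 2 < α) (hμ : 0 < μ)
    (x₁ : ℝ → ℝ)
    (hroot : ∀ l > (0:ℝ), 0 < x₁ l ∧
      (α / 2) * D₁ * (x₁ l) ^ ((α - 2) / 2) * ((2 : ℝ) ^ (D₂ * π * l * x₁ l) - 1)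
        + Real.log 2 * D₁ * D₂ * π * l * (x₁ l) ^ (α / 2)
            * (2 : ℝ) ^ (D₂ * π * l * x₁ l)
      = μ * π * l)
    (huniq : ∀ l > (0:ℝ), ∀ x > (0:ℝ),
      (α / 2) * D₁ * x ^ ((α - 2) / 2) * ((2 : ℝ) ^ (D₂ * π * l * x) - 1)
        + Real.log 2 * D₁ * D₂ * π * l * x ^ (α / 2) * (2 : ℝ) ^ (D₂ * π * l * x)
      = μ * π * l → x = x₁ l) :
    StrictMonoOn
      (fun l => D₁ * (x₁ l) ^ (α / 2) * ((2 : ℝ) ^ (D₂ * π * l * x₁ l) - 1))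
      (Set.Ioi 0) := by
  intro a ha b hb hab
  simp only [Set.mem_Ioi] at ha hb
  obtain ⟨hxa, ida⟩ := hroot a ha
  obtain ⟨hxb, idb⟩ := hroot b hb
  have hπ : (0:ℝ) < π := Real.pi_pos
  have hlog2 : 0 < Real.log 2 := Real.log_pos one_lt_two
  have hα2 : (0:ℝ) < α / 2 := by linarith
  have he : (0:ℝ) ≤ (α - 2) / 2 := by linarith
  have hsa : 0 < D₂ * π * a * x₁ a := by positivity
  have hsb : 0 < D₂ * π * b * x₁ b := by positivity
  have h2a : (1:ℝ) < (2:ℝ) ^ (D₂ * π * a * x₁ a) := one_lt_two_rpow' hsa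
  have h2b : (1:ℝ) < (2:ℝ) ^ (D₂ * π * b * x₁ b) := one_lt_two_rpow' hsb
  have hpa : (x₁ a) ^ (α/2) = (x₁ a) ^ ((α-2)/2) * x₁ a := by
    rw [show α/2 = (α-2)/2 + 1 by ring, Real.rpow_add_one hxa.ne']
  have hpb : (x₁ b) ^ (α/2) = (x₁ b) ^ ((α-2)/2) * x₁ b := by
    rw [show α/2 = (α-2)/2 + 1 by ring, Real.rpow_add_one hxb.ne']
  -- Step A : x₁ b < x₁ a
  have hxba : x₁ b < x₁ a := by
    by_contra hcon
    push_neg at hcon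
    have m1 : (x₁ a) ^ ((α-2)/2) ≤ (x₁ b) ^ ((α-2)/2) := Real.rpow_le_rpow hxa.le hcon he
    have m3 : (x₁ a) ^ (α/2) ≤ (x₁ b) ^ (α/2) := Real.rpow_le_rpow hxa.le hcon hα2.le
    have m2 : (2:ℝ) ^ (D₂ * π * b * x₁ a) ≤ (2:ℝ) ^ (D₂ * π * b * x₁ b) := by
      apply Real.rpow_le_rpow_of_exponent_le (by norm_num)
      have h0 := mul_le_mul_of_nonneg_left hcon (show (0:ℝ) ≤ D₂ * π * b by positivity)
      linarith [h0]
    have hsba : 0 < D₂ * π * b * x₁ a := by positivity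
    have h2ba : (1:ℝ) < (2:ℝ) ^ (D₂ * π * b * x₁ a) := one_lt_two_rpow' hsba
    have q1 : (x₁ a) ^ ((α-2)/2) * ((2:ℝ) ^ (D₂ * π * b * x₁ a) - 1)
        ≤ (x₁ b) ^ ((α-2)/2) * ((2:ℝ) ^ (D₂ * π * b * x₁ b) - 1) :=
      mul_le_mul m1 (by linarith) (by linarith) (by positivity)
    have q2 : (x₁ a) ^ (α/2) * (2:ℝ) ^ (D₂ * π * b * x₁ a)
        ≤ (x₁ b) ^ (α/2) * (2:ℝ) ^ (D₂ * π * b * x₁ b) :=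
      mul_le_mul m3 m2 (by positivity) (by positivity)
    have r1 := mul_le_mul_of_nonneg_left q1 (show (0:ℝ) ≤ α/2*D₁ by positivity)
    have r2 := mul_le_mul_of_nonneg_left q2
      (show (0:ℝ) ≤ Real.log 2 * D₁ * D₂ * π * b by positivity)
    have hmono : (α / 2) * D₁ * (x₁ a) ^ ((α - 2) / 2) * ((2 : ℝ) ^ (D₂ * π * b * x₁ a) - 1)
          + Real.log 2 * D₁ * D₂ * π * b * (x₁ a) ^ (α / 2) * (2 : ℝ) ^ (D₂ * π * b * x₁ a)
        ≤ μ * π * b := by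
      rw [← idb]; linarith [r1, r2]
    have hvv : D₂ * π * a * x₁ a < D₂ * π * b * x₁ a := by
      have h0 := mul_lt_mul_of_pos_left hab (show (0:ℝ) < D₂ * π * x₁ a by positivity)
      linarith [h0]
    have hr := ratio_aux hsa hvv
    have hpos : 0 < D₂ * π * x₁ a := by positivity
    have k1 : ((2:ℝ) ^ (D₂ * π * a * x₁ a) - 1) * b
        < ((2:ℝ) ^ (D₂ * π * b * x₁ a) - 1) * a := by
      have h3 : (((2:ℝ) ^ (D₂ * π * a * x₁ a) - 1) * b) * (D₂ * π * x₁ a)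
          < (((2:ℝ) ^ (D₂ * π * b * x₁ a) - 1) * a) * (D₂ * π * x₁ a) := by
        linear_combination hr
      exact lt_of_mul_lt_mul_right h3 hpos.le
    have k2 : (2:ℝ) ^ (D₂ * π * a * x₁ a) < (2:ℝ) ^ (D₂ * π * b * x₁ a) :=
      (Real.rpow_lt_rpow_left_iff one_lt_two).2 hvv
    have c1 := mul_lt_mul_of_pos_left k1
      (show (0:ℝ) < (α/2)*D₁*(x₁ a)^((α-2)/2) by positivity)
    have c2 := mul_lt_mul_of_pos_left k2
      (show (0:ℝ) < Real.log 2 * D₁ * D₂ * π * (a*b) * (x₁ a)^(α/2) by positivity)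
    have hEq : b * (μ*π*a)
        = (α/2)*D₁*(x₁ a)^((α-2)/2) * (((2:ℝ)^(D₂*π*a*x₁ a) - 1) * b)
          + (Real.log 2 * D₁ * D₂ * π * (a*b) * (x₁ a)^(α/2)) * (2:ℝ)^(D₂*π*a*x₁ a) := by
      linear_combination (-b) * ida
    have hscale : b * (μ * π * a) <
        a * ((α / 2) * D₁ * (x₁ a) ^ ((α - 2) / 2) * ((2 : ℝ) ^ (D₂ * π * b * x₁ a) - 1)
          + Real.log 2 * D₁ * D₂ * π * b * (x₁ a) ^ (α / 2)
            * (2 : ℝ) ^ (D₂ * π * b * x₁ a)) := by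
      linarith [hEq, c1, c2]
    have habs := mul_le_mul_of_nonneg_left hmono ha.le
    linarith [hscale, habs]
  -- rearranged identities (multiplied by x)
  have ida' : (α/2) * D₁ * (x₁ a)^(α/2) * ((2:ℝ)^(D₂*π*a*x₁ a) - 1)
      + Real.log 2 * D₁ * D₂ * π * (a * x₁ a) * (x₁ a)^(α/2) * (2:ℝ)^(D₂*π*a*x₁ a)
      = μ * π * (a * x₁ a) := by
    linear_combination (x₁ a) * ida + ((α/2) * D₁ * ((2:ℝ)^(D₂*π*a*x₁ a) - 1)) * hpa
  have idb' : (α/2) * D₁ * (x₁ b)^(α/2) * ((2:ℝ)^(D₂*π*b*x₁ b) - 1)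
      + Real.log 2 * D₁ * D₂ * π * (b * x₁ b) * (x₁ b)^(α/2) * (2:ℝ)^(D₂*π*b*x₁ b)
      = μ * π * (b * x₁ b) := by
    linear_combination (x₁ b) * idb + ((α/2) * D₁ * ((2:ℝ)^(D₂*π*b*x₁ b) - 1)) * hpb
  have hA : (x₁ b)^(α/2) < (x₁ a)^(α/2) := Real.rpow_lt_rpow hxb.le hxba hα2
  have hGapos : (0:ℝ) < (2:ℝ)^(D₂*π*a*x₁ a) - 1 := by linarith
  have hta : 0 < a * x₁ a := by positivity
  have htb : 0 < b * x₁ b := by positivity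
  -- Step B : a * x₁ a < b * x₁ b
  have hT : a * x₁ a < b * x₁ b := by
    by_contra hcon
    push_neg at hcon
    have h2' : (2:ℝ)^(D₂*π*b*x₁ b) ≤ (2:ℝ)^(D₂*π*a*x₁ a) := by
      apply Real.rpow_le_rpow_of_exponent_le (by norm_num)
      have h0 := mul_le_mul_of_nonneg_left hcon (show (0:ℝ) ≤ D₂ * π by positivity)
      linarith [h0]
    have hratio : ((2:ℝ)^(D₂*π*b*x₁ b) - 1) * (a * x₁ a)
        ≤ ((2:ℝ)^(D₂*π*a*x₁ a) - 1) * (b * x₁ b) := by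
      rcases eq_or_lt_of_le hcon with heq | hlt
      · have hexp : D₂*π*b*x₁ b = D₂*π*a*x₁ a := by linear_combination (D₂*π) * heq
        rw [hexp, heq]
      · have hlt' : D₂*π*b*x₁ b < D₂*π*a*x₁ a := by
          have h0 := mul_lt_mul_of_pos_left hlt (show (0:ℝ) < D₂ * π by positivity)
          linarith [h0]
        have hr := ratio_aux hsb hlt'
        have hpos : 0 < D₂ * π := by positivity
        have h3 : (((2:ℝ)^(D₂*π*b*x₁ b) - 1) * (a * x₁ a)) * (D₂ * π)
            < (((2:ℝ)^(D₂*π*a*x₁ a) - 1) * (b * x₁ b)) * (D₂ * π) := by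
          linear_combination hr
        exact (lt_of_mul_lt_mul_right h3 hpos.le).le
    have n1 := mul_le_mul_of_nonneg_left hratio
      (show (0:ℝ) ≤ (α/2)*D₁*(x₁ b)^(α/2) by positivity)
    have n2 := mul_le_mul_of_nonneg_left h2'
      (show (0:ℝ) ≤ Real.log 2 * D₁ * D₂ * π * ((b*x₁ b)*(a*x₁ a)) * (x₁ b)^(α/2)
        by positivity)
    have hQ : 0 < (α/2)*D₁*(((2:ℝ)^(D₂*π*a*x₁ a) - 1) * (b*x₁ b))
        + Real.log 2 * D₁ * D₂ * π * ((b*x₁ b)*(a*x₁ a)) * (2:ℝ)^(D₂*π*a*x₁ a) := by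
      have t1 : 0 < (α/2)*D₁*(((2:ℝ)^(D₂*π*a*x₁ a) - 1) * (b*x₁ b)) := by
        apply mul_pos (by positivity)
        exact mul_pos hGapos htb
      have t2 : 0 < Real.log 2 * D₁ * D₂ * π * ((b*x₁ b)*(a*x₁ a))
          * (2:ℝ)^(D₂*π*a*x₁ a) := by positivity
      linarith
    have n3 := mul_lt_mul_of_pos_right hA hQ
    have eb' : μ * π * ((b*x₁ b) * (a*x₁ a))
        = (α/2)*D₁*(x₁ b)^(α/2) * (((2:ℝ)^(D₂*π*b*x₁ b) - 1) * (a*x₁ a))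
          + (Real.log 2 * D₁ * D₂ * π * ((b*x₁ b)*(a*x₁ a)) * (x₁ b)^(α/2))
            * (2:ℝ)^(D₂*π*b*x₁ b) := by
      linear_combination (-(a * x₁ a)) * idb'
    have ea' : μ * π * ((a*x₁ a) * (b*x₁ b))
        = (α/2)*D₁*(x₁ a)^(α/2) * (((2:ℝ)^(D₂*π*a*x₁ a) - 1) * (b*x₁ b))
          + (Real.log 2 * D₁ * D₂ * π * ((a*x₁ a)*(b*x₁ b)) * (x₁ a)^(α/2))
            * (2:ℝ)^(D₂*π*a*x₁ a) := by
      linear_combination (-(b * x₁ b)) * ida'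
    linarith [eb', ea', n1, n2, n3]
  -- Step C : conclude
  simp only []
  by_contra hP
  push_neg at hP
  have hPa_pos : 0 < D₁ * (x₁ a)^(α/2) * ((2:ℝ)^(D₂*π*a*x₁ a) - 1) := by
    have := mul_pos (show (0:ℝ) < D₁ * (x₁ a)^(α/2) by positivity) hGapos
    linarith [this]
  have ea2 : μ * π * ((a*x₁ a) * (b*x₁ b))
      = (α/2) * (D₁ * (x₁ a)^(α/2) * ((2:ℝ)^(D₂*π*a*x₁ a) - 1)) * (b*x₁ b)
        + Real.log 2 * D₂ * π * ((a*x₁ a)*(b*x₁ b))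
          * (D₁ * (x₁ a)^(α/2) * (2:ℝ)^(D₂*π*a*x₁ a)) := by
    linear_combination (-(b * x₁ b)) * ida'
  have eb2 : μ * π * ((b*x₁ b) * (a*x₁ a))
      = (α/2) * (D₁ * (x₁ b)^(α/2) * ((2:ℝ)^(D₂*π*b*x₁ b) - 1)) * (a*x₁ a)
        + Real.log 2 * D₂ * π * ((b*x₁ b)*(a*x₁ a))
          * (D₁ * (x₁ b)^(α/2) * (2:ℝ)^(D₂*π*b*x₁ b)) := by
    linear_combination (-(a * x₁ a)) * idb'
  have i1a : D₁ * (x₁ b)^(α/2) * ((2:ℝ)^(D₂*π*b*x₁ b) - 1) * (a*x₁ a)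
      ≤ D₁ * (x₁ a)^(α/2) * ((2:ℝ)^(D₂*π*a*x₁ a) - 1) * (a*x₁ a) :=
    mul_le_mul_of_nonneg_right hP hta.le
  have i1b : D₁ * (x₁ a)^(α/2) * ((2:ℝ)^(D₂*π*a*x₁ a) - 1) * (a*x₁ a)
      < D₁ * (x₁ a)^(α/2) * ((2:ℝ)^(D₂*π*a*x₁ a) - 1) * (b*x₁ b) :=
    mul_lt_mul_of_pos_left hT hPa_pos
  have i1 := mul_lt_mul_of_pos_left (lt_of_le_of_lt i1a i1b) hα2
  have i2core : D₁ * (x₁ b)^(α/2) * ((2:ℝ)^(D₂*π*b*x₁ b) - 1) + D₁ * (x₁ b)^(α/2)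
      < D₁ * (x₁ a)^(α/2) * ((2:ℝ)^(D₂*π*a*x₁ a) - 1) + D₁ * (x₁ a)^(α/2) := by
    have := mul_lt_mul_of_pos_left hA hD₁
    linarith [hP]
  have i2 := mul_lt_mul_of_pos_left i2core
    (show (0:ℝ) < Real.log 2 * D₂ * π * ((a*x₁ a)*(b*x₁ b)) by positivity)
  linarith [ea2, eb2, i1, i2]
end

section
/- Fix D₁, D₃ > 0, α > 2, μ > 0, P_c > 0, and define, via the high-SE approximations, g(λ) = P_c + D₁ x(λ)^{α/2} e^{D₃πλx(λ)} − μπλx(λ) where x(λ) = (α/(2D₃πλ)) W((2D₃πλ/α)(μ/(D₁D₃))^{2/α}) solves (ln stands for natural log) the stationarity condition D₁D₃ x^{α/2} e^{D₃πλx} = μ. Then g(λ) = 0 holds at λ₁ = (1/(πD₃) + P_c/(μπ)) (D₁D₃/μ)^{2/α} exp(2/α + 2D₃P_c/(μα)). -/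
open Real

lemma mul_exp_injOn {s t : ℝ} (hs : -1 ≤ s) (ht : -1 ≤ t)
    (h : s * Real.exp s = t * Real.exp t) : s = t := by
  have hmono : StrictMonoOn (fun u : ℝ => u * Real.exp u) (Set.Ici (-1)) := by
    apply strictMonoOn_of_deriv_pos (convex_Ici _)
    · exact (continuous_id.mul Real.continuous_exp).continuousOn
    · intro u hu
      rw [interior_Ici, Set.mem_Ioi] at hu
      have hderiv : HasDerivAt (fun u : ℝ => u * Real.exp u)
          (1 * Real.exp u + u * Real.exp u) u :=
        (hasDerivAt_id u).mul (Real.hasDerivAt_exp u)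
      rw [hderiv.deriv]
      have := Real.exp_pos u
      nlinarith
  exact hmono.injOn hs ht h

/-- At the closed-form threshold density
`lam₁ = (1/(πD₃) + P_c/(μπ))(D₁D₃/μ)^{2/α} exp(2/α + 2D₃P_c/(μα))`, the minimized
high-SE Lagrangian `g(λ) = P_c + D₁ x(λ)^{α/2} e^{D₃πλx(λ)} − μπλx(λ)` equals zero,
where `x(λ) = (α/(2D₃πλ)) W((2D₃πλ/α)(μ/(D₁D₃))^{2/α})`. -/
theorem stmt_15 (W : ℝ → ℝ)
    (hW : ∀ y : ℝ, -Real.exp (-1) ≤ y → W y * Real.exp (W y) = y ∧ -1 ≤ W y)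
    (D₁ D₃ α μ Pc : ℝ) (hD₁ : 0 < D₁) (hD₃ : 0 < D₃) (hα : 2 < α) (hμ : 0 < μ)
    (hPc : 0 < Pc)
    (x : ℝ → ℝ)
    (hx : ∀ l > (0:ℝ),
      x l = α / (2 * D₃ * π * l) * W ((2 * D₃ * π * l / α) * (μ / (D₁ * D₃)) ^ (2 / α)))
    (hstat : ∀ l > (0:ℝ), D₁ * D₃ * (x l) ^ (α / 2) * Real.exp (D₃ * π * l * x l) = μ) :
    let lam₁ := (1 / (π * D₃) + Pc / (μ * π)) * (D₁ * D₃ / μ) ^ (2 / α)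
        * Real.exp (2 / α + 2 * D₃ * Pc / (μ * α));
    Pc + D₁ * (x lam₁) ^ (α / 2) * Real.exp (D₃ * π * lam₁ * x lam₁) - μ * π * lam₁ * x lam₁
      = 0 := by
  intro lam₁
  have hπ : (0:ℝ) < π := Real.pi_pos
  have hα0 : (0:ℝ) < α := by linarith
  set w : ℝ := 2 / α + 2 * D₃ * Pc / (μ * α) with hw
  have hw0 : 0 < w := by
    rw [hw]; positivity
  set A : ℝ := D₁ * D₃ / μ with hA
  have hA0 : 0 < A := by positivity
  have hlam : lam₁ = (1 / (π * D₃) + Pc / (μ * π)) * A ^ (2 / α) * Real.exp w := rfl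
  have hlam0 : 0 < lam₁ := by
    rw [hlam]
    have h1 : 0 < 1 / (π * D₃) := by positivity
    have h2 : 0 < Pc / (μ * π) := by positivity
    have h3 : (0:ℝ) < A ^ (2 / α) := Real.rpow_pos_of_pos hA0 _
    positivity
  -- the argument of W at lam₁
  have hAinv : (μ / (D₁ * D₃)) = A⁻¹ := by
    rw [hA]; field_simp
  have hpowinv : A ^ (2 / α) * A⁻¹ ^ (2 / α) = 1 := by
    rw [← Real.mul_rpow hA0.le (by positivity)]
    rw [mul_inv_cancel₀ hA0.ne', Real.one_rpow]
  have hy : (2 * D₃ * π * lam₁ / α) * (μ / (D₁ * D₃)) ^ (2 / α) = w * Real.exp w := by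
    rw [hAinv, hlam]
    have : 2 * D₃ * π * ((1 / (π * D₃) + Pc / (μ * π)) * A ^ (2 / α) * Real.exp w) / α
        * A⁻¹ ^ (2 / α)
        = (2 * D₃ * π * (1 / (π * D₃) + Pc / (μ * π)) / α) * (A ^ (2/α) * A⁻¹ ^ (2/α))
          * Real.exp w := by ring
    rw [this, hpowinv, mul_one]
    have hcoef : 2 * D₃ * π * (1 / (π * D₃) + Pc / (μ * π)) / α = w := by
      rw [hw]; field_simp
    rw [hcoef]
  have hWy := hW ((2 * D₃ * π * lam₁ / α) * (μ / (D₁ * D₃)) ^ (2 / α))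
    (by rw [hy]; nlinarith [Real.exp_pos (-1:ℝ), Real.exp_pos w])
  have hWeq : W ((2 * D₃ * π * lam₁ / α) * (μ / (D₁ * D₃)) ^ (2 / α)) = w := by
    apply mul_exp_injOn hWy.2 (by linarith)
    rw [hWy.1, hy]
  have hxval : x lam₁ = α / (2 * D₃ * π * lam₁) * w := by
    rw [hx lam₁ hlam0, hWeq]
  -- μ π lam₁ x = μ/D₃ + Pc
  have hkey : μ * π * lam₁ * x lam₁ = μ / D₃ + Pc := by
    rw [hxval, hw]
    field_simp
  -- from stationarity
  have hst := hstat lam₁ hlam0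
  have hD : D₁ * (x lam₁) ^ (α / 2) * Real.exp (D₃ * π * lam₁ * x lam₁) = μ / D₃ := by
    have : D₃ * (D₁ * (x lam₁) ^ (α / 2) * Real.exp (D₃ * π * lam₁ * x lam₁)) = μ := by
      rw [← hst]; ring
    field_simp at this ⊢
    linarith
  rw [hD, hkey]
  ring
end
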